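/- For all positive integers l, q, s there is a constant σ = σ(l,q,s) with the following property. Let G be a graph and let P be a σ-polypath in G (a family of σ pairwise vertex-disjoint induced paths). Then either (a) there exists an (s,l)-cluster (S, L) in G with S ⊆ V(P) and L ⊆ P, or (b) there exists an l-loose q-polypath Q in G with Q ⊆ P. -/

import Mathlib

open scoped Classical

/-- `l` is the vertex sequence of an induced path in `G`. -/
def IsPathList {V : Type} (G : SimpleGraph V) (l : List V) : Prop :=
  l ≠ [] ∧ l.Nodup ∧ ∀ i j : Fin l.length,
    (G.Adj (l.get i) (l.get j) ↔ (i.1 + 1 = j.1 ∨ j.1 + 1 = i.1))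

/-- `P` is a `w`-polypath in `G`: a set of `w` pairwise vertex-disjoint
induced paths. -/
def IsPolypath {V : Type} (G : SimpleGraph V) (w : ℕ) (P : Finset (List V)) : Prop :=
  P.card = w ∧ (∀ p ∈ P, IsPathList G p) ∧
  ∀ p ∈ P, ∀ q ∈ P, p ≠ q → ∀ v ∈ p, v ∉ q

/-- The polypath `P` is `d`-loose: every vertex of every path in `P` has
neighbors in fewer than `d` other paths of `P`. -/
def DLoose {V : Type} (G : SimpleGraph V) (d : ℕ) (P : Finset (List V)) : Prop :=
  ∀ p ∈ P, ∀ v ∈ p,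
    ((P.erase p).filter (fun q => ∃ u ∈ q, G.Adj v u)).card < d

/-- `(S, L)` is an `(s,l)`-cluster in `G`: `S` has `s` vertices, `L` is an
`l`-polypath in `G − S`, and every vertex of `S` has a neighbor in every
path of `L`. -/
def IsClusterP {V : Type} (G : SimpleGraph V) (s l : ℕ)
    (S : Finset V) (L : Finset (List V)) : Prop :=
  S.card = s ∧ IsPolypath G l L ∧
  (∀ p ∈ L, ∀ v ∈ p, v ∉ S) ∧
  (∀ x ∈ S, ∀ p ∈ L, ∃ v ∈ p, G.Adj x v)

theorem myRamsey (q : ℕ) (C : Type) [Fintype C] [Nonempty C] (n : ℕ) :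
    ∃ ρ : ℕ, ∀ (S : Finset ℕ) (f : Finset ℕ → C), ρ ≤ S.card →
      ∃ T, T ⊆ S ∧ n ≤ T.card ∧ ∃ c : C, ∀ U, U ⊆ T → U.card = q → f U = c := by
  induction q generalizing n with
  | zero =>
    exact ⟨n, fun S f h => ⟨S, subset_rfl, h, f ∅,
      fun U hU hc => by rw [Finset.card_eq_zero.mp hc]⟩⟩
  | succ q IH =>
    choose ρq hρq using IH
    set h : ℕ → ℕ := fun k => Nat.rec 0 (fun _ acc => ρq acc + 1) k with hh
    have chain : ∀ k (S : Finset ℕ) (f : Finset ℕ → C), h k ≤ S.card →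
        ∃ A, A ⊆ S ∧ A.card = k ∧ ∃ c : ℕ → C, ∀ a ∈ A, ∀ U,
          U ⊆ A.filter (fun b => a < b) → U.card = q → f (insert a U) = c a := by
      intro k
      induction k with
      | zero =>
        intro S f _
        exact ⟨∅, Finset.empty_subset _, Finset.card_empty, fun _ => Classical.arbitrary C,
          by simp⟩
      | succ k ihk =>
        intro S f hS
        have hk1 : h (k + 1) = ρq (h k) + 1 := rfl
        have hne : S.Nonempty := by
          rw [← Finset.card_pos]; omega
        set a := S.min' hne with hadef
        have ha : a ∈ S := S.min'_mem hne
        have hcard : ρq (h k) ≤ (S.erase a).card := by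
          rw [Finset.card_erase_of_mem ha]; omega
        obtain ⟨T, hTS, hTc, ca, hca⟩ := hρq (h k) (S.erase a) (fun U => f (insert a U)) hcard
        obtain ⟨A', hA'T, hA'c, c', hc'⟩ := ihk T f hTc
        have haA' : a ∉ A' := fun hx => (Finset.mem_erase.mp (hTS (hA'T hx))).1 rfl
        have hlt : ∀ b ∈ A', a < b := by
          intro b hb
          have hbS : b ∈ S.erase a := hTS (hA'T hb)
          exact lt_of_le_of_ne (S.min'_le b (Finset.mem_erase.mp hbS).2)
            (Ne.symm (Finset.mem_erase.mp hbS).1)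
        refine ⟨insert a A', Finset.insert_subset ha
          (hA'T.trans (hTS.trans (S.erase_subset _))), ?_,
          fun x => if x = a then ca else c' x, ?_⟩
        · rw [Finset.card_insert_of_notMem haA', hA'c]
        · intro b hb U hU hUc
          rcases Finset.mem_insert.mp hb with rfl | hbA'
          · simp only [if_pos rfl]
            have : U ⊆ T := by
              intro u hu
              have := hU hu
              rw [Finset.mem_filter, Finset.mem_insert] at this
              rcases this.1 with rfl | h'
              · exact absurd this.2 (lt_irrefl _)
              · exact hA'T h'
            exact hca U this hUc
          · have hba : b ≠ a := fun h => haA' (h ▸ hbA')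
            simp only [if_neg hba]
            refine hc' b hbA' U ?_ hUc
            intro u hu
            have := hU hu
            rw [Finset.mem_filter, Finset.mem_insert] at this
            rcases this.1 with rfl | h'
            · exact absurd this.2 (not_lt.mpr (le_of_lt (hlt b hbA')))
            · exact Finset.mem_filter.mpr ⟨h', this.2⟩
    refine ⟨h (Fintype.card C * n + 1), fun S f hS => ?_⟩
    obtain ⟨A, hAS, hAc, c, hc⟩ := chain (Fintype.card C * n + 1) S f hS
    have hpig : (Finset.univ : Finset C).card * n < A.card := by
      rw [hAc, Finset.card_univ]; omega
    obtain ⟨y, -, hy⟩ := Finset.exists_lt_card_fiber_of_mul_lt_card_of_maps_to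
      (fun a _ => Finset.mem_univ (c a)) hpig
    refine ⟨A.filter (fun x => c x = y), (Finset.filter_subset _ _).trans hAS, hy.le, y, ?_⟩
    intro U hU hUc
    have hUne : U.Nonempty := by rw [← Finset.card_pos]; omega
    set a := U.min' hUne with hadef
    have haU : a ∈ U := U.min'_mem hUne
    have haf : a ∈ A.filter (fun x => c x = y) := hU haU
    have h1 : U.erase a ⊆ A.filter (fun b => a < b) := by
      intro u hu
      rw [Finset.mem_erase] at hu
      exact Finset.mem_filter.mpr ⟨(Finset.mem_filter.mp (hU hu.2)).1,
        lt_of_le_of_ne (U.min'_le u hu.2) (Ne.symm hu.1)⟩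
    have h2 : (U.erase a).card = q := by rw [Finset.card_erase_of_mem haU, hUc]; omega
    have := hc a (Finset.mem_filter.mp haf).1 (U.erase a) h1 h2
    rw [Finset.insert_erase haU] at this
    rw [this]
    exact (Finset.mem_filter.mp haf).2
theorem stmt4 (l q s : ℕ) (hl : 0 < l) (hq : 0 < q) (hs : 0 < s) :
    ∃ σ : ℕ, ∀ (V : Type) (G : SimpleGraph V) (P : Finset (List V)),
      IsPolypath G σ P →
      (∃ (S : Finset V) (L : Finset (List V)),
        (∀ x ∈ S, ∃ p ∈ P, x ∈ p) ∧ L ⊆ P ∧ IsClusterP G s l S L) ∨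
      (∃ Q ⊆ P, IsPolypath G q Q ∧ DLoose G l Q) := by
  classical
  obtain ⟨ρ, hρ⟩ := myRamsey (l + 1) (Option (Fin (l + 1))) (q + l + s)
  refine ⟨ρ, fun V G P hP => ?_⟩
  obtain ⟨hPcard, hPpath, hPdisj⟩ := hP
  set pth : ℕ → List V := fun k =>
    if h : k < P.card then ((P.equivFin.symm ⟨k, h⟩ : {x // x ∈ P}) : List V) else [] with hpth
  have pthmem : ∀ k, k < P.card → pth k ∈ P := by
    intro k hk
    simp only [hpth, dif_pos hk]
    exact (P.equivFin.symm ⟨k, hk⟩).2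
  have pthinj : ∀ j, j < P.card → ∀ k, k < P.card → pth j = pth k → j = k := by
    intro j hj k hk hjk
    simp only [hpth, dif_pos hj, dif_pos hk] at hjk
    exact congrArg Fin.val (P.equivFin.symm.injective (Subtype.ext hjk))
  have getD_lt : ∀ (xs : List ℕ) (j : ℕ) (h : j < xs.length), xs.getD j 0 = xs[j] := by
    intro xs j h
    simp [List.getD_eq_getElem?_getD, List.getElem?_eq_getElem h]
  set sg : Finset ℕ → ℕ → ℕ := fun U j => (U.sort (· ≤ ·)).getD j 0 with hsg
  set Good : Finset ℕ → Fin (l + 1) → Prop := fun U i =>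
    ∃ v ∈ pth (sg U i.1), ∀ j : Fin (l + 1), j ≠ i → ∃ u ∈ pth (sg U j.1), G.Adj v u with hGood
  set col : Finset ℕ → Option (Fin (l + 1)) := fun U =>
    if h : ∃ i, Good U i then some h.choose else none with hcol
  have colsome : ∀ U a, col U = some a → Good U a := by
    intro U a h
    by_cases hex : ∃ i, Good U i
    · simp only [hcol, dif_pos hex] at h
      exact Option.some.inj h ▸ hex.choose_spec
    · simp only [hcol, dif_neg hex] at h
      exact absurd h (by simp)
  have colnone : ∀ U, col U = none → ∀ i, ¬Good U i := by
    intro U h i hGi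
    have hex : ∃ i, Good U i := ⟨i, hGi⟩
    simp [hcol, dif_pos hex] at h
  obtain ⟨T, hTsub, hTcard, c, hmono⟩ := hρ (Finset.range P.card) col
    (by rw [Finset.card_range, hPcard])
  have hTr : ∀ t ∈ T, t < P.card := fun t ht => Finset.mem_range.mp (hTsub ht)
  rcases c with _ | a
  · -- loose case
    right
    obtain ⟨T', hT'T, hT'card⟩ := Finset.exists_subset_card_eq (s := T) (n := q) (by omega)
    have hT'r : ∀ t ∈ T', t < P.card := fun t ht => hTr t (hT'T ht)
    have hQP : T'.image pth ⊆ P := by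
      intro p hp
      obtain ⟨t, ht, rfl⟩ := Finset.mem_image.mp hp
      exact pthmem t (hT'r t ht)
    refine ⟨T'.image pth, hQP, ⟨?_, fun p hp => hPpath p (hQP hp),
      fun p hp p' hp' hne => hPdisj p (hQP hp) p' (hQP hp') hne⟩, ?_⟩
    · rw [Finset.card_image_of_injOn, hT'card]
      intro x hx y hy hxy
      exact pthinj x (hT'r x hx) y (hT'r y hy) hxy
    · -- DLoose
      intro p hp v hv
      by_contra hcon
      push_neg at hcon
      obtain ⟨L, hLF, hLcard⟩ := Finset.exists_subset_card_eq hcon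
      have hLQ : ∀ x ∈ L, x ∈ T'.image pth ∧ x ≠ p ∧ ∃ u ∈ x, G.Adj v u := by
        intro x hx
        have h1 := Finset.mem_filter.mp (hLF hx)
        have h2 := Finset.mem_erase.mp h1.1
        exact ⟨h2.2, h2.1, h1.2⟩
      have hpL : p ∉ L := fun h => (hLQ p h).2.1 rfl
      have hsubQ : insert p L ⊆ T'.image pth := by
        intro x hx
        rcases Finset.mem_insert.mp hx with rfl | hx
        · exact hp
        · exact (hLQ x hx).1
      set inv : List V → ℕ := fun x => if h : ∃ k ∈ T', pth k = x then h.choose else 0 with hinvdef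
      have hinv : ∀ x ∈ insert p L, inv x ∈ T' ∧ pth (inv x) = x := by
        intro x hx
        obtain ⟨k, hk, hpk⟩ := Finset.mem_image.mp (hsubQ hx)
        have hex : ∃ k ∈ T', pth k = x := ⟨k, hk, hpk⟩
        simp only [hinvdef, dif_pos hex]
        exact ⟨hex.choose_spec.1, hex.choose_spec.2⟩
      set U := (insert p L).image inv with hU
      have hUsubT' : U ⊆ T' := by
        intro u hu
        obtain ⟨x, hx, rfl⟩ := Finset.mem_image.mp hu
        exact (hinv x hx).1
      have hUcard : U.card = l + 1 := by
        rw [hU, Finset.card_image_of_injOn, Finset.card_insert_of_notMem hpL, hLcard]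
        intro x hx y hy hxy
        rw [← (hinv x hx).2, ← (hinv y hy).2, hxy]
      have hcolU := hmono U (hUsubT'.trans hT'T) hUcard
      set xs := U.sort (· ≤ ·) with hxs
      have hxslen : xs.length = l + 1 := by rw [hxs, Finset.length_sort, hUcard]
      have hxnodup : xs.Nodup := Finset.sort_nodup _ _
      have hmemxs : inv p ∈ xs :=
        (Finset.mem_sort _).mpr (Finset.mem_image.mpr ⟨p, Finset.mem_insert_self p L, rfl⟩)
      obtain ⟨i, hi⟩ := List.mem_iff_get.mp hmemxs
      refine colnone U hcolU ⟨i.1, hxslen ▸ i.2⟩ ⟨v, ?_, ?_⟩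
      · have h1 : sg U i.1 = inv p := by
          rw [hsg]; simp only
          rw [← hxs, getD_lt xs i.1 i.2]
          exact hi
        rw [h1, (hinv p (Finset.mem_insert_self p L)).2]
        exact hv
      · intro j hj
        have hjlt : j.1 < xs.length := by have := j.2; omega
        have hmem : xs[j.1] ∈ U := (Finset.mem_sort _).mp (List.getElem_mem hjlt)
        obtain ⟨x, hx, hxinv⟩ := Finset.mem_image.mp hmem
        have hxp : x ≠ p := by
          rintro rfl
          have heq : xs.get ⟨j.1, hjlt⟩ = xs.get i := by
            rw [hi]
            exact hxinv.symm
          have hji := congrArg Fin.val ((List.Nodup.get_inj_iff hxnodup).mp heq)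
          exact hj (Fin.ext hji)
        have hxL : x ∈ L := (Finset.mem_insert.mp hx).resolve_left hxp
        have h1 : sg U j.1 = xs[j.1] := by
          rw [hsg]; simp only
          rw [← hxs, getD_lt xs j.1 hjlt]
        rw [h1, ← hxinv, (hinv x hx).2]
        exact (hLQ x hxL).2.2
  · -- cluster case
    left
    set ms := T.sort (· ≤ ·) with hms
    have hmlen : ms.length = T.card := Finset.length_sort _
    have hmsort : ms.Pairwise (· < ·) := (Finset.sortedLT_sort T).pairwise
    set f : ℕ → ℕ := fun k => ms.getD k 0 with hf
    have hlen : l + s ≤ ms.length := by omega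
    have hfmem : ∀ k, k < ms.length → f k ∈ T := by
      intro k hk
      rw [hf]; simp only
      rw [getD_lt ms k hk]
      exact (Finset.mem_sort _).mp (List.getElem_mem hk)
    have hfP : ∀ k, k < ms.length → f k < P.card := fun k hk => hTr _ (hfmem k hk)
    have hfmono : ∀ j k, j < k → k < ms.length → f j < f k := by
      intro j k hjk hk
      have hj : j < ms.length := hjk.trans hk
      rw [hf]; simp only
      rw [getD_lt ms j hj, getD_lt ms k hk]
      exact hmsort.rel_get_of_lt (show (⟨j, hj⟩ : Fin ms.length) < ⟨k, hk⟩ from hjk)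
    have hfinj : ∀ j k, j < ms.length → k < ms.length → f j = f k → j = k := by
      intro j k hj hk hjk
      by_contra hne
      rcases Nat.lt_or_ge j k with h | h
      · exact absurd hjk (Nat.ne_of_lt (hfmono j k h hk))
      · exact absurd hjk.symm (Nat.ne_of_lt (hfmono k j (lt_of_le_of_ne h (Ne.symm hne)) hj))
    have hdisjp : ∀ j k, j < ms.length → k < ms.length → j ≠ k →
        ∀ x ∈ pth (f j), x ∉ pth (f k) := by
      intro j k hj hk hjk x hxj hxk
      have hpne : pth (f j) ≠ pth (f k) := fun he =>
        hjk (hfinj j k hj hk (pthinj _ (hfP j hj) _ (hfP k hk) he))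
      exact hPdisj _ (pthmem _ (hfP j hj)) _ (pthmem _ (hfP k hk)) hpne x hxj hxk
    have ha : a.1 ≤ l := Nat.lt_succ_iff.mp a.2
    set ks : List ℕ := List.range a.1 ++ List.range' (a.1 + s) (l - a.1) with hks
    have hkslen : ks.length = l := by
      rw [hks, List.length_append, List.length_range, List.length_range']; omega
    have hkmem : ∀ k ∈ ks, (k < a.1 ∨ (a.1 + s ≤ k ∧ k < a.1 + s + (l - a.1))) := by
      intro k hk
      rcases List.mem_append.mp hk with h | h
      · exact Or.inl (List.mem_range.mp h)
      · exact Or.inr ⟨(List.mem_range'_1.mp h).1, (List.mem_range'_1.mp h).2⟩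
    have hkbound : ∀ k ∈ ks, k < ms.length := by
      intro k hk; rcases hkmem k hk with h | h <;> omega
    have hksnodup : ks.Nodup := by
      have hpw : ks.Pairwise (· < ·) := by
        rw [hks, List.pairwise_append]
        refine ⟨List.pairwise_lt_range, List.pairwise_lt_range', ?_⟩
        intro x hx y hy
        have h1 := List.mem_range.mp hx
        have h2 := (List.mem_range'_1.mp hy).1
        omega
      exact hpw.imp (fun h => Nat.ne_of_lt h)
    set zs := ks.map f with hzs
    have hzsnodup : zs.Nodup := by
      refine List.Nodup.map_on ?_ hksnodup
      intro x hx y hy hxy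
      exact hfinj x y (hkbound x hx) (hkbound y hy) hxy
    have hzsP : ∀ z ∈ zs, z < P.card := by
      intro z hz
      obtain ⟨k, hk, rfl⟩ := List.mem_map.mp hz
      exact hfP k (hkbound k hk)
    set LF := (zs.map pth).toFinset with hLFdef
    have hLFmem : ∀ pl ∈ LF, ∃ k ∈ ks, pl = pth (f k) := by
      intro pl hpl
      rw [hLFdef, List.mem_toFinset] at hpl
      obtain ⟨z, hz, rfl⟩ := List.mem_map.mp hpl
      obtain ⟨k, hk, rfl⟩ := List.mem_map.mp hz
      exact ⟨k, hk, rfl⟩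
    have hLFP : LF ⊆ P := by
      intro pl hpl
      obtain ⟨k, hk, rfl⟩ := hLFmem pl hpl
      exact pthmem _ (hfP k (hkbound k hk))
    have hLFcard : LF.card = l := by
      rw [hLFdef, List.toFinset_card_of_nodup, List.length_map, List.length_map, hkslen]
      refine List.Nodup.map_on ?_ hzsnodup
      intro x hx y hy hxy
      exact pthinj x (hzsP x hx) y (hzsP y hy) hxy
    have key : ∀ i : Fin s, ∃ v, v ∈ pth (f (a.1 + i.1)) ∧
        ∀ pl ∈ LF, ∃ u ∈ pl, G.Adj v u := by
      intro i
      set js := List.range a.1 ++ (a.1 + i.1) :: List.range' (a.1 + s) (l - a.1) with hjs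
      have hjslen : js.length = l + 1 := by
        rw [hjs, List.length_append, List.length_range, List.length_cons,
          List.length_range']; omega
      have hjsmem : ∀ j ∈ js, j = a.1 + i.1 ∨ j ∈ ks := by
        intro j hj
        rcases List.mem_append.mp hj with h | h
        · exact Or.inr (List.mem_append.mpr (Or.inl h))
        · rcases List.mem_cons.mp h with h | h
          · exact Or.inl h
          · exact Or.inr (List.mem_append.mpr (Or.inr h))
      have hjsbound : ∀ j ∈ js, j < ms.length := by
        intro j hj
        rcases hjsmem j hj with rfl | h
        · have := i.2; omega
        · exact hkbound j h
      have hjspair : js.Pairwise (· < ·) := by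
        rw [hjs, List.pairwise_append]
        refine ⟨List.pairwise_lt_range, ?_, ?_⟩
        · rw [List.pairwise_cons]
          refine ⟨fun y hy => ?_, List.pairwise_lt_range'⟩
          have := (List.mem_range'_1.mp hy).1
          have := i.2
          omega
        · intro x hx y hy
          have h1 := List.mem_range.mp hx
          rcases List.mem_cons.mp hy with rfl | h
          · omega
          · have := (List.mem_range'_1.mp h).1; omega
      set xs := js.map f with hxs
      have hxspair : xs.Pairwise (· < ·) := by
        rw [hxs, List.pairwise_map]
        exact hjspair.imp_of_mem (fun hx hy h => hfmono _ _ h (hjsbound _ hy))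
      have hxsnodup : xs.Nodup := hxspair.imp (fun h => Nat.ne_of_lt h)
      set U := xs.toFinset with hU
      have hUsort : U.sort (· ≤ ·) = xs :=
        (List.toFinset_sort (· ≤ ·) hxsnodup).mpr (hxspair.imp (fun h => le_of_lt h))
      have hUcard : U.card = l + 1 := by
        rw [hU, List.toFinset_card_of_nodup hxsnodup, hxs, List.length_map, hjslen]
      have hUsub : U ⊆ T := by
        intro z hz
        rw [hU, List.mem_toFinset, hxs] at hz
        obtain ⟨k, hk, rfl⟩ := List.mem_map.mp hz
        exact hfmem k (hjsbound k hk)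
      obtain ⟨v, hv1, hv2⟩ := colsome U a (hmono U hUsub hUcard)
      have hsg_of : ∀ (j k : ℕ), js[j]? = some k → sg U j = f k := by
        intro j k hjk
        rw [hsg]; simp only
        rw [hUsort, List.getD_eq_getElem?_getD, hxs, List.getElem?_map, hjk]
        rfl
      have hjq_lt : ∀ j, j < a.1 → js[j]? = some j := by
        intro j hj
        rw [hjs, List.getElem?_append_left (by simpa using hj)]
        exact List.getElem?_range hj
      have hjq_a : js[a.1]? = some (a.1 + i.1) := by
        rw [hjs, List.getElem?_append_right (by simp), List.length_range, Nat.sub_self]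
        exact List.getElem?_cons_zero
      have hjq_gt : ∀ t, t < l - a.1 → js[a.1 + 1 + t]? = some (a.1 + s + t) := by
        intro t ht
        rw [hjs, List.getElem?_append_right (by simp only [List.length_range]; omega),
          List.length_range]
        have hidx : a.1 + 1 + t - a.1 = t + 1 := by omega
        rw [hidx, List.getElem?_cons_succ]
        rw [List.getElem?_range' ht]
        simp
      refine ⟨v, ?_, ?_⟩
      · rw [← hsg_of a.1 (a.1 + i.1) hjq_a]
        exact hv1
      · intro pl hpl
        obtain ⟨k, hk, rfl⟩ := hLFmem pl hpl
        rcases hkmem k hk with hcase | hcase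
        · have hjne : (⟨k, by omega⟩ : Fin (l + 1)) ≠ a := by
            intro h
            have := congrArg Fin.val h
            simp at this
            omega
          have := hv2 ⟨k, by omega⟩ hjne
          rwa [hsg_of k k (hjq_lt k hcase)] at this
        · set t := k - (a.1 + s) with htdef
          have ht : t < l - a.1 := by omega
          have hjne : (⟨a.1 + 1 + t, by omega⟩ : Fin (l + 1)) ≠ a := by
            intro h
            have := congrArg Fin.val h
            simp at this
            omega
          have := hv2 ⟨a.1 + 1 + t, by omega⟩ hjne
          rw [hsg_of _ (a.1 + s + t) (hjq_gt t ht)] at this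
          have hkt : a.1 + s + t = k := by omega
          rwa [hkt] at this
    choose vv hvv1 hvv2 using key
    have hvvinj : Function.Injective vv := by
      intro i j hij
      by_contra hne
      have hne' : a.1 + i.1 ≠ a.1 + j.1 := by
        intro h
        exact hne (Fin.ext (by omega))
      have hi2 := i.2
      have hj2 := j.2
      exact hdisjp (a.1 + i.1) (a.1 + j.1) (by omega) (by omega) hne'
        (vv i) (hvv1 i) (hij ▸ hvv1 j)
    refine ⟨Finset.image vv Finset.univ, LF, ?_, hLFP, ?_, ⟨hLFcard, ?_, ?_⟩, ?_, ?_⟩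
    · intro x hx
      obtain ⟨i, -, rfl⟩ := Finset.mem_image.mp hx
      have := i.2
      exact ⟨pth (f (a.1 + i.1)), pthmem _ (hfP _ (by omega)), hvv1 i⟩
    · rw [Finset.card_image_of_injective _ hvvinj, Finset.card_univ, Fintype.card_fin]
    · exact fun p hp => hPpath p (hLFP hp)
    · exact fun p hp p' hp' hne => hPdisj p (hLFP hp) p' (hLFP hp') hne
    · intro p hp x hxp hxS
      obtain ⟨i, -, rfl⟩ := Finset.mem_image.mp hxS
      obtain ⟨k, hk, rfl⟩ := hLFmem p hp
      have hi2 := i.2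
      have hkne : k ≠ a.1 + i.1 := by
        rcases hkmem k hk with h | h <;> omega
      exact hdisjp k (a.1 + i.1) (hkbound k hk) (by omega) hkne (vv i) hxp (hvv1 i)
    · intro x hxS p hp
      obtain ⟨i, -, rfl⟩ := Finset.mem_image.mp hxS
      exact hvv2 i p hp
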